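/- Let μ > 0, σ > 0 and set r = σ/μ. Then for every randomized pricing mechanism A (probability measure on [0,∞)), sup_{F ∈ 𝔽_{μ,σ}} OPT(F)/REV(A;F) ≥ 1 + ln(1+r²). Equivalently, for every A and every δ > 0 there exists F ∈ 𝔽_{μ,σ} with OPT(F) ≥ (1 + ln(1+r²) − δ)·REV(A;F). -/

import Mathlib

open MeasureTheory

/-- Revenue of posting price `p` against valuation distribution `F`:
`REV(p;F) = p · P(X ≥ p)`. -/
noncomputable def rev (F : Measure ℝ) (p : ℝ) : ℝ :=
  p * (F (Set.Ici p)).toReal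

/-- Optimal revenue `OPT(F) = sup_{p ≥ 0} p · P(X ≥ p)`. -/
noncomputable def opt (F : Measure ℝ) : ℝ :=
  ⨆ p ∈ Set.Ici (0 : ℝ), rev F p

/-- Revenue of a randomized pricing mechanism `A` (a measure over prices):
`REV(A;F) = E_{p∼A}[REV(p;F)]`. -/
noncomputable def mrev (A F : Measure ℝ) : ℝ :=
  ∫ p, rev F p ∂A

/-- `F` is a `(μ,σ)`-distributed distribution: a probability measure on `[0,∞)`
with mean `m` and variance at most `s²`. -/
structure MeanVarLe (F : Measure ℝ) (m s : ℝ) : Prop where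
  prob : IsProbabilityMeasure F
  supp : F (Set.Iio 0) = 0
  int_mean : Integrable (fun x => x) F
  int_sq : Integrable (fun x => x ^ 2) F
  mean : ∫ x, x ∂F = m
  var_le : ∫ x, (x - m) ^ 2 ∂F ≤ s ^ 2

/-- A randomized pricing mechanism: a probability measure over prices in `[0,∞)`. -/
def IsPriceMech (A : Measure ℝ) : Prop :=
  IsProbabilityMeasure A ∧ A (Set.Iio 0) = 0

lemma my_integrable_dirac {f : ℝ → ℝ} (hf : Measurable f) (a : ℝ) :
    Integrable f (Measure.dirac a) := by
  refine ⟨hf.aestronglyMeasurable, ?_⟩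
  rw [HasFiniteIntegral, lintegral_dirac]
  exact ENNReal.coe_lt_top
noncomputable def twoPoint (q v : ℝ) : Measure ℝ :=
  ENNReal.ofReal (1 - q) • Measure.dirac 0 + ENNReal.ofReal q • Measure.dirac v
lemma twoPoint_apply (q v : ℝ) (s : Set ℝ) :
    twoPoint q v s =
      ENNReal.ofReal (1 - q) * s.indicator 1 0 + ENNReal.ofReal q * s.indicator 1 v := by
  simp [twoPoint, Measure.dirac_apply]
lemma twoPoint_integrable {f : ℝ → ℝ} (hf : Measurable f) (q v : ℝ) :
    Integrable f (twoPoint q v) := by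
  refine Integrable.add_measure ?_ ?_ <;>
    exact (my_integrable_dirac hf _).smul_measure ENNReal.ofReal_ne_top
lemma twoPoint_integral (q v : ℝ) (hq0 : 0 ≤ q) (hq1 : q ≤ 1) {f : ℝ → ℝ}
    (hf : Measurable f) :
    ∫ x, f x ∂(twoPoint q v) = (1 - q) * f 0 + q * f v := by
  rw [twoPoint, integral_add_measure
      ((my_integrable_dirac hf _).smul_measure ENNReal.ofReal_ne_top)
      ((my_integrable_dirac hf _).smul_measure ENNReal.ofReal_ne_top),
    integral_smul_measure, integral_smul_measure, integral_dirac, integral_dirac,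
    ENNReal.toReal_ofReal (by linarith), ENNReal.toReal_ofReal hq0]
  simp [smul_eq_mul]
lemma twoPoint_prob (q v : ℝ) (hq0 : 0 ≤ q) (hq1 : q ≤ 1) :
    IsProbabilityMeasure (twoPoint q v) := by
  constructor
  rw [twoPoint_apply]
  simp only [Set.indicator_univ, Pi.one_apply, mul_one]
  rw [← ENNReal.ofReal_add (by linarith) hq0]
  norm_num

-- NEW PART

lemma twoPoint_meanVarLe {m v s : ℝ} (hm : 0 < m) (hv : m ≤ v)
    (hvar : m * v - m ^ 2 ≤ s ^ 2) : MeanVarLe (twoPoint (m / v) v) m s := by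
  have hv0 : 0 < v := lt_of_lt_of_le hm hv
  have hq0 : 0 ≤ m / v := by positivity
  have hq1 : m / v ≤ 1 := (div_le_one hv0).2 hv
  refine ⟨twoPoint_prob _ _ hq0 hq1, ?_, twoPoint_integrable measurable_id _ _,
    twoPoint_integrable (by fun_prop) _ _, ?_, ?_⟩
  · rw [twoPoint_apply]
    simp [Set.indicator_of_notMem, hv0.not_gt, lt_irrefl, hv0.le]
  · rw [twoPoint_integral _ _ hq0 hq1 (f := fun x => x) measurable_id]
    field_simp
    ring
  · rw [twoPoint_integral _ _ hq0 hq1 (by fun_prop)]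
    have : (1 - m / v) * (0 - m) ^ 2 + m / v * (v - m) ^ 2 = m * v - m ^ 2 := by
      field_simp; ring
    rw [this]; exact hvar

lemma twoPoint_Ici_le {m v : ℝ} (hm : 0 < m) (hv : m ≤ v) {p : ℝ} (hp : 0 < p)
    (hpv : p ≤ v) : twoPoint (m / v) v (Set.Ici p) = ENNReal.ofReal (m / v) := by
  rw [twoPoint_apply]
  rw [Set.indicator_of_notMem (by simpa using hp), Set.indicator_of_mem (by simpa using hpv)]
  simp

lemma twoPoint_Ici_gt {m v : ℝ} (hm : 0 < m) (hv : m ≤ v) {p : ℝ}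
    (hpv : v < p) : twoPoint (m / v) v (Set.Ici p) = 0 := by
  have hv0 : 0 < v := lt_of_lt_of_le hm hv
  rw [twoPoint_apply]
  rw [Set.indicator_of_notMem (by simpa using (hv0.trans hpv).not_ge),
    Set.indicator_of_notMem (by simpa using hpv.not_ge)]
  simp

lemma twoPoint_opt_ge {m v : ℝ} (hm : 0 < m) (hv : m ≤ v) :
    m ≤ opt (twoPoint (m / v) v) := by
  have hv0 : 0 < v := lt_of_lt_of_le hm hv
  have hq0 : 0 ≤ m / v := by positivity
  have hq1 : m / v ≤ 1 := (div_le_one hv0).2 hv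
  haveI : IsProbabilityMeasure (twoPoint (m / v) v) := twoPoint_prob _ _ hq0 hq1
  set F := twoPoint (m / v) v with hF
  have hrevle : ∀ p : ℝ, 0 ≤ p → rev F p ≤ v := by
    intro p hp
    by_cases hpv : p ≤ v
    · have h1 : (F (Set.Ici p)).toReal ≤ 1 := by
        have h2 := prob_le_one (μ := F) (s := Set.Ici p)
        have h3 := ENNReal.toReal_mono (by simp) h2
        simpa using h3
      have h4 : rev F p ≤ p * 1 := mul_le_mul_of_nonneg_left h1 hp
      linarith
    · rw [rev, twoPoint_Ici_gt hm hv (not_le.1 hpv)]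
      simpa using hv0.le
  have hbdd : BddAbove (Set.range fun p => ⨆ _ : p ∈ Set.Ici (0 : ℝ), rev F p) := by
    refine ⟨v, ?_⟩
    rintro _ ⟨p, rfl⟩
    exact Real.iSup_le (fun hp => hrevle p hp) hv0.le
  have hrevv : rev F v = m := by
    rw [rev, twoPoint_Ici_le hm hv hv0 le_rfl, ENNReal.toReal_ofReal hq0]
    field_simp
  have hvmem : v ∈ Set.Ici (0 : ℝ) := hv0.le
  have hfin : m ≤ ⨆ p ∈ Set.Ici (0 : ℝ), rev F p :=
    le_ciSup_of_le hbdd v (by rw [ciSup_pos hvmem]; exact hrevv.ge)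
  exact hfin

lemma twoPoint_mrev {A : Measure ℝ} (hA : IsPriceMech A) {m v : ℝ} (hm : 0 < m)
    (hv : m ≤ v) :
    mrev A (twoPoint (m / v) v) = (m / v) * ∫ x in Set.Ioc 0 v, x ∂A := by
  have hv0 : 0 < v := lt_of_lt_of_le hm hv
  have hq0 : 0 ≤ m / v := by positivity
  have hae : ∀ᵐ p ∂A, 0 ≤ p := by
    rw [ae_iff]
    simp only [not_le]; exact hA.2
  have hcongr : ∫ p, rev (twoPoint (m / v) v) p ∂A
      = ∫ p, (m / v) * (Set.Ioc 0 v).indicator id p ∂A := by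
    refine integral_congr_ae ?_
    filter_upwards [hae] with p hp
    rcases eq_or_lt_of_le hp with h0 | h0
    · rw [← h0]
      simp [rev, Set.indicator_of_notMem]
    · by_cases hpv : p ≤ v
      · rw [rev, twoPoint_Ici_le hm hv h0 hpv, ENNReal.toReal_ofReal hq0,
          Set.indicator_of_mem (Set.mem_Ioc.mpr ⟨h0, hpv⟩)]
        simp [mul_comm]
      · rw [rev, twoPoint_Ici_gt hm hv (not_le.1 hpv),
          Set.indicator_of_notMem (fun hmem => hpv hmem.2)]
        simp
  rw [mrev, hcongr, integral_const_mul, integral_indicator measurableSet_Ioc]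
  simp [id]

set_option maxHeartbeats 1000000 in
lemma key_lemma (A : Measure ℝ) [IsProbabilityMeasure A] {m V c' : ℝ} (hm : 0 < m)
    (hV : m < V) (hc : c' < 1 + Real.log (V / m)) :
    ∃ v, m ≤ v ∧ v ≤ V ∧ c' * (∫ x in Set.Ioc 0 v, x ∂A) ≤ v := by
  by_contra hcon
  push_neg at hcon
  set G : ℝ → ℝ := fun v => ∫ x in Set.Ioc 0 v, x ∂A with hGdef
  have hint : ∀ a b : ℝ, IntegrableOn (fun x => x) (Set.Ioc a b) A := by
    intro a b
    refine Measure.integrableOn_of_bounded (measure_ne_top A _)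
      measurable_id.aestronglyMeasurable (M := max |a| |b|) ?_
    filter_upwards [ae_restrict_mem measurableSet_Ioc] with x hx
    rw [Real.norm_eq_abs, abs_le]
    constructor
    · have h2 : |a| ≤ max |a| |b| := le_max_left _ _
      have h3 := neg_abs_le a
      have h4 := hx.1
      linarith
    · exact le_trans hx.2 (le_max_of_le_right (le_abs_self b))
  have hGnonneg : ∀ v, 0 ≤ G v :=
    fun v => setIntegral_nonneg measurableSet_Ioc (fun x hx => le_of_lt hx.1)
  have hc'pos : 0 < c' := by
    have h := hcon m le_rfl hV.le
    nlinarith [hGnonneg m]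
  have hseg : ∀ a b : ℝ, a ≤ b → 0 < b →
      (∫ x in Set.Ioc a b, x ∂A) ≤ b * (A (Set.Ioc a b)).toReal := by
    intro a b hab hb
    have h1 : (∫ x in Set.Ioc a b, x ∂A) ≤ ∫ _ in Set.Ioc a b, b ∂A := by
      refine setIntegral_mono_on (hint a b) (integrableOn_const ?_) measurableSet_Ioc
        (fun x hx => hx.2)
      exact measure_ne_top A _
    rw [setIntegral_const, smul_eq_mul, mul_comm] at h1
    exact h1
  have hGadd : ∀ a b : ℝ, 0 ≤ a → a ≤ b → G b = G a + ∫ x in Set.Ioc a b, x ∂A := by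
    intro a b ha hab
    rw [hGdef]
    simp only
    rw [← setIntegral_union (Set.Ioc_disjoint_Ioc_of_le le_rfl) measurableSet_Ioc (hint 0 a) (hint a b),
      Set.Ioc_union_Ioc_eq_Ioc ha hab]
  -- setup grid
  set L : ℝ := Real.log (V / m) with hLdef
  have hL : 0 < L := Real.log_pos ((one_lt_div hm).2 hV)
  set d : ℝ := 1 + L - c' with hd
  have hdpos : 0 < d := by rw [hd]; linarith
  set n : ℕ := ⌈L ^ 2 / d⌉₊ + 1 with hn
  have hnpos : 0 < (n : ℝ) := by positivity
  have hngt : L ^ 2 / d < (n : ℝ) := by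
    have := Nat.le_ceil (L ^ 2 / d)
    rw [hn]; push_cast; linarith
  set x : ℝ := L / n with hx
  have hxpos : 0 < x := by positivity
  set w : ℕ → ℝ := fun k => m * Real.exp (k * x) with hw
  have hwpos : ∀ k, 0 < w k := fun k => by positivity
  have hwm : ∀ k, m ≤ w k := by
    intro k
    have h1 : (1 : ℝ) ≤ Real.exp (k * x) := Real.one_le_exp (by positivity)
    calc m = m * 1 := by ring
    _ ≤ m * Real.exp (k * x) := by nlinarith
  have hwmono : ∀ k, w k ≤ w (k + 1) := by
    intro k
    have : (k : ℝ) * x ≤ ((k : ℝ) + 1) * x := by nlinarith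
    have := Real.exp_le_exp.2 this
    rw [hw]; push_cast; nlinarith
  have hwn : w n = V := by
    rw [hw]
    simp only
    rw [hx, mul_div_cancel₀ _ (ne_of_gt hnpos), Real.exp_log (div_pos (hm.trans hV) hm)]
    field_simp
  have hwV : ∀ k ≤ n, w k ≤ V := by
    intro k hk
    rw [← hwn]
    have h1 : (k : ℝ) * x ≤ (n : ℝ) * x := by
      have : (k : ℝ) ≤ n := by exact_mod_cast hk
      nlinarith
    have h2 := Real.exp_le_exp.2 h1
    show m * Real.exp ((k : ℝ) * x) ≤ m * Real.exp ((n : ℝ) * x)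
    nlinarith
  have hratio : ∀ k : ℕ, w k = Real.exp (-x) * w (k + 1) := by
    intro k
    have h1 : Real.exp (-x) * Real.exp (((k : ℝ) + 1) * x) = Real.exp ((k : ℝ) * x) := by
      rw [← Real.exp_add]
      congr 1
      ring
    show m * Real.exp ((k : ℝ) * x) = Real.exp (-x) * (m * Real.exp (((k : ℕ) + 1 : ℕ) * x))
    push_cast
    rw [← h1]
    ring
  have hGlow : ∀ k, k ≤ n → w k / c' ≤ G (w k) := by
    intro k hk
    have h := hcon (w k) (hwm k) (hwV k hk)
    rw [div_le_iff₀ hc'pos]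
    linarith
  have main : ∀ k, k ≤ n →
      G (w k) / w k + k * (1 - Real.exp (-x)) / c' ≤ (A (Set.Ioc 0 (w k))).toReal := by
    intro k
    induction k with
    | zero =>
      intro _
      simp only [Nat.cast_zero, zero_mul, zero_div, add_zero]
      rw [div_le_iff₀ (hwpos 0)]
      have h0 : G (w 0) ≤ w 0 * (A (Set.Ioc 0 (w 0))).toReal :=
        hseg 0 (w 0) (hwpos 0).le (hwpos 0)
      linarith
    | succ k ih =>
      intro hk1
      have hk : k ≤ n := Nat.le_of_succ_le hk1
      have ihh := ih hk
      have hmeas : (A (Set.Ioc 0 (w (k + 1)))).toReal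
          = (A (Set.Ioc 0 (w k))).toReal + (A (Set.Ioc (w k) (w (k + 1)))).toReal := by
        rw [← ENNReal.toReal_add (measure_ne_top A _) (measure_ne_top A _),
          ← measure_union (Set.Ioc_disjoint_Ioc_of_le le_rfl) measurableSet_Ioc,
          Set.Ioc_union_Ioc_eq_Ioc (hwpos k).le (hwmono k)]
      have hGsplit : G (w (k + 1)) = G (w k) + ∫ y in Set.Ioc (w k) (w (k + 1)), y ∂A :=
        hGadd (w k) (w (k + 1)) (hwpos k).le (hwmono k)
      have hsegk : (∫ y in Set.Ioc (w k) (w (k + 1)), y ∂A)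
          ≤ w (k + 1) * (A (Set.Ioc (w k) (w (k + 1)))).toReal :=
        hseg (w k) (w (k + 1)) (hwmono k) (hwpos (k + 1))
      have h2 : (G (w (k + 1)) - G (w k)) / w (k + 1)
          ≤ (A (Set.Ioc (w k) (w (k + 1)))).toReal := by
        rw [div_le_iff₀ (hwpos (k + 1))]
        linarith
      have hGk := hGlow k hk
      have hid : (1 - Real.exp (-x)) * w (k + 1) = w (k + 1) - w k := by
        rw [hratio k]; ring
      have step : (1 - Real.exp (-x)) / c' ≤ G (w k) / w k - G (w k) / w (k + 1) := by
        have h3 : G (w k) / w k - G (w k) / w (k + 1)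
            = G (w k) * (w (k + 1) - w k) / (w k * w (k + 1)) := by
          rw [div_sub_div _ _ (hwpos k).ne' (hwpos (k + 1)).ne']
          ring
        rw [h3, div_le_div_iff₀ hc'pos (by positivity)]
        have h5 : w k ≤ c' * G (w k) := by
          have := (div_le_iff₀ hc'pos).mp hGk
          linarith
        have h6 : 0 ≤ w (k + 1) - w k := by linarith [hwmono k]
        have e1 : (1 - Real.exp (-x)) * (w k * w (k + 1)) = w k * (w (k + 1) - w k) := by
          rw [show (1 - Real.exp (-x)) * (w k * w (k + 1))
              = w k * ((1 - Real.exp (-x)) * w (k + 1)) from by ring, hid]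
        have e2 : w k * (w (k + 1) - w k) ≤ (c' * G (w k)) * (w (k + 1) - w k) :=
          mul_le_mul_of_nonneg_right h5 h6
        rw [e1]
        linarith
      have hsplitdiv : (G (w (k + 1)) - G (w k)) / w (k + 1)
          = G (w (k + 1)) / w (k + 1) - G (w k) / w (k + 1) := by ring
      have hkt : ((k : ℕ) + 1 : ℕ) * (1 - Real.exp (-x)) / c'
          = (k : ℝ) * (1 - Real.exp (-x)) / c' + (1 - Real.exp (-x)) / c' := by
        push_cast; ring
      rw [hmeas, hkt]
      linarith
  have hmain := main n le_rfl
  have hle1 : (A (Set.Ioc 0 (w n))).toReal ≤ 1 := by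
    have h1 := prob_le_one (μ := A) (s := Set.Ioc 0 (w n))
    have h2 := ENNReal.toReal_mono (by simp) h1
    simpa using h2
  have hGV := hGlow n le_rfl
  have h1c : 1 / c' ≤ G (w n) / w n := by
    rw [div_le_div_iff₀ hc'pos (hwpos n)]
    have := (div_le_iff₀ hc'pos).mp hGV
    linarith
  have h2 : (1 + (n : ℝ) * (1 - Real.exp (-x))) / c' ≤ 1 := by
    rw [add_div]
    linarith
  have h3 : 1 + (n : ℝ) * (1 - Real.exp (-x)) ≤ c' := (div_le_one hc'pos).mp h2
  have hexp : Real.exp (-x) ≤ 1 / (1 + x) := by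
    have h4 : x + 1 ≤ Real.exp x := Real.add_one_le_exp x
    rw [Real.exp_neg, inv_eq_one_div]
    exact one_div_le_one_div_of_le (by positivity) (by linarith)
  have h5 : L - d < (n : ℝ) * (1 - Real.exp (-x)) := by
    have h6 : (n : ℝ) * (1 - 1 / (1 + x)) ≤ (n : ℝ) * (1 - Real.exp (-x)) :=
      mul_le_mul_of_nonneg_left (by linarith) hnpos.le
    have h7 : (n : ℝ) * (1 - 1 / (1 + x)) = L / (1 + x) := by
      rw [hx]
      field_simp
      ring
    have h8 : L - d < L / (1 + x) := by
      rw [lt_div_iff₀ (by positivity)]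
      have h9 : L * x = L ^ 2 / n := by rw [hx]; field_simp
      have h10 : L ^ 2 / (n : ℝ) < d := by
        rw [div_lt_iff₀ hnpos]
        rw [div_lt_iff₀ hdpos] at hngt
        linarith
      nlinarith [mul_pos hdpos hxpos]
    linarith
  have hfalse : c' < c' := by
    calc c' = 1 + L - d := by rw [hd]; ring
    _ < 1 + (n : ℝ) * (1 - Real.exp (-x)) := by linarith
    _ ≤ c' := h3
  exact absurd hfalse (lt_irrefl c')

/-- For `μ, σ > 0` and `r = σ/μ`, every randomized pricing mechanism `A`
satisfies `sup_{F ∈ 𝔽_{μ,σ}} OPT(F)/REV(A;F) ≥ 1 + ln(1+r²)` (ratios in `ℝ≥0∞`, so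
`c/0 = ∞` for `c > 0`); equivalently, for every `δ > 0` there is `F ∈ 𝔽_{μ,σ}` with
`OPT(F) ≥ (1 + ln(1+r²) − δ)·REV(A;F)`. -/
theorem stmt9 (μ σ : ℝ) (hμ : 0 < μ) (hσ : 0 < σ) (r : ℝ) (hr : r = σ / μ) :
    ∀ A : Measure ℝ, IsPriceMech A →
      (ENNReal.ofReal (1 + Real.log (1 + r ^ 2)) ≤
        ⨆ F : {F : Measure ℝ // MeanVarLe F μ σ},
          ENNReal.ofReal (opt F.1) / ENNReal.ofReal (mrev A F.1)) ∧
      ∀ δ : ℝ, 0 < δ → ∃ F : Measure ℝ, MeanVarLe F μ σ ∧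
        (1 + Real.log (1 + r ^ 2) - δ) * mrev A F ≤ opt F := by
  intro A hA
  haveI : IsProbabilityMeasure A := hA.1
  set c : ℝ := 1 + Real.log (1 + r ^ 2) with hc
  have hrpos : 0 < r := by rw [hr]; positivity
  have hV : μ < μ * (1 + r ^ 2) := by nlinarith [mul_pos hμ (mul_pos hrpos hrpos)]
  have hlogeq : Real.log (μ * (1 + r ^ 2) / μ) = Real.log (1 + r ^ 2) := by
    congr 1
    field_simp
  have main : ∀ δ : ℝ, 0 < δ → ∃ F : Measure ℝ, MeanVarLe F μ σ ∧
      ((c - δ) * mrev A F ≤ opt F) ∧ μ ≤ opt F ∧ 0 ≤ mrev A F := by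
    intro δ hδ
    obtain ⟨v, hv1, hv2, hv3⟩ := key_lemma A (c' := c - δ) hμ hV
      (by rw [hlogeq]; rw [hc]; linarith)
    have hv0 : 0 < v := hμ.trans_le hv1
    have hvar : μ * v - μ ^ 2 ≤ σ ^ 2 := by
      have hrs : μ ^ 2 * r ^ 2 = σ ^ 2 := by
        rw [hr]
        field_simp
      nlinarith
    refine ⟨twoPoint (μ / v) v, twoPoint_meanVarLe hμ hv1 hvar, ?_, twoPoint_opt_ge hμ hv1, ?_⟩
    · rw [twoPoint_mrev hA hμ hv1]
      have h1 : (c - δ) * (μ / v * ∫ y in Set.Ioc 0 v, y ∂A)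
          = (μ / v) * ((c - δ) * ∫ y in Set.Ioc 0 v, y ∂A) := by ring
      have h2 : (μ / v) * ((c - δ) * ∫ y in Set.Ioc 0 v, y ∂A) ≤ (μ / v) * v :=
        mul_le_mul_of_nonneg_left hv3 (by positivity)
      have h3 : (μ / v) * v = μ := div_mul_cancel₀ _ (ne_of_gt hv0)
      have h4 := twoPoint_opt_ge hμ hv1
      linarith
    · rw [twoPoint_mrev hA hμ hv1]
      have hG : 0 ≤ ∫ y in Set.Ioc 0 v, y ∂A :=
        setIntegral_nonneg measurableSet_Ioc (fun y hy => le_of_lt hy.1)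
      exact mul_nonneg (by positivity) hG
  constructor
  · refine ENNReal.le_of_forall_pos_le_add fun ε hε _ => ?_
    obtain ⟨F, hF, hineq, hopt, hmrev⟩ := main ε (by exact_mod_cast hε)
    have hoptpos : 0 < opt F := lt_of_lt_of_le hμ hopt
    have step1 : ENNReal.ofReal (c - ε) ≤
        ENNReal.ofReal (opt F) / ENNReal.ofReal (mrev A F) := by
      rcases le_or_gt (mrev A F) 0 with hm0 | hm0
      · rw [ENNReal.ofReal_eq_zero.2 hm0,
          ENNReal.div_zero (by simpa [ENNReal.ofReal_eq_zero, not_le] using hoptpos)]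
        exact le_top
      · rcases le_or_gt (c - ε) 0 with hce | hce
        · rw [ENNReal.ofReal_eq_zero.2 hce]
          exact zero_le
        · rw [ENNReal.le_div_iff_mul_le
            (Or.inl (by simpa [ENNReal.ofReal_eq_zero, not_le] using hm0))
            (Or.inl ENNReal.ofReal_ne_top),
            ← ENNReal.ofReal_mul hce.le]
          exact ENNReal.ofReal_le_ofReal hineq
    have step2 : ENNReal.ofReal (c - ε) ≤
        ⨆ F : {F : Measure ℝ // MeanVarLe F μ σ},
          ENNReal.ofReal (opt F.1) / ENNReal.ofReal (mrev A F.1) :=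
      le_trans step1 (le_iSup
        (fun F' : {F : Measure ℝ // MeanVarLe F μ σ} =>
          ENNReal.ofReal (opt F'.1) / ENNReal.ofReal (mrev A F'.1)) ⟨F, hF⟩)
    calc ENNReal.ofReal c = ENNReal.ofReal ((c - ε) + ε) := by ring_nf
    _ ≤ ENNReal.ofReal (c - ε) + ENNReal.ofReal ε := ENNReal.ofReal_add_le
    _ ≤ (⨆ F : {F : Measure ℝ // MeanVarLe F μ σ},
          ENNReal.ofReal (opt F.1) / ENNReal.ofReal (mrev A F.1)) + ε := by
        rw [ENNReal.ofReal_coe_nnreal]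
        exact add_le_add step2 le_rfl
  · intro δ hδ
    obtain ⟨F, hF, hineq, _, _⟩ := main δ hδ
    exact ⟨F, hF, hineq⟩
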